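/- Let M be an n×n complex matrix, S a proper nonempty subset, and λ₀ a complex number that is an eigenvalue of M but not an eigenvalue of M_{S̄S̄}. Then det(R_S(M)(λ₀) − λ₀ I) = 0; that is, every eigenvalue of M not shared with M_{S̄S̄} is an eigenvalue of the isospectral reduction. -/

import Mathlib

open Matrix

noncomputable def isoReduction {n : ℕ} (M : Matrix (Fin n) (Fin n) ℂ)
    (p : Fin n → Prop) [DecidablePred p] (lam : ℂ) :
    Matrix {i // p i} {i // p i} ℂ :=
  M.toBlock p p -
    M.toBlock p (fun i => ¬ p i) *
      (M.toBlock (fun i => ¬ p i) (fun i => ¬ p i) - lam • 1)⁻¹ *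
        M.toBlock (fun i => ¬ p i) p

set_option maxHeartbeats 1600000 in
/-- Every eigenvalue `λ₀` of `M` that is not an eigenvalue of `M_{S̄S̄}` is an eigenvalue
of the isospectral reduction: `det(R_S(M)(λ₀) − λ₀ I) = 0`. -/
theorem isoReduction_eigenvalue {n : ℕ} (M : Matrix (Fin n) (Fin n) ℂ)
    (S : Finset (Fin n)) (hS : S.Nonempty) (hS' : S ≠ Finset.univ) (lam₀ : ℂ)
    (hM : (M - lam₀ • 1).det = 0)
    (hSc : (M.toBlock (fun i => ¬ i ∈ S) (fun i => ¬ i ∈ S) - lam₀ • 1).det ≠ 0) :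
    (isoReduction M (fun i => i ∈ S) lam₀ - lam₀ • 1).det = 0 := by
  have hblocks : (M - lam₀ • 1).toBlock (fun i => ¬ i ∈ S) (fun i => ¬ i ∈ S)
      = M.toBlock (fun i => ¬ i ∈ S) (fun i => ¬ i ∈ S) - lam₀ • 1 := by
    ext i j
    simp [toBlock_apply, Matrix.sub_apply, Matrix.smul_apply, Matrix.one_apply, Subtype.ext_iff]
  have h12 : (M - lam₀ • 1).toBlock (fun i => i ∈ S) (fun i => ¬ i ∈ S)
      = M.toBlock (fun i => i ∈ S) (fun i => ¬ i ∈ S) := by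
    ext i j
    have : (i : Fin n) ≠ (j : Fin n) := fun h => j.2 (h ▸ i.2)
    simp [toBlock_apply, Matrix.sub_apply, Matrix.smul_apply, Matrix.one_apply, this]
  have h21 : (M - lam₀ • 1).toBlock (fun i => ¬ i ∈ S) (fun i => i ∈ S)
      = M.toBlock (fun i => ¬ i ∈ S) (fun i => i ∈ S) := by
    ext i j
    have : (i : Fin n) ≠ (j : Fin n) := fun h => i.2 (h ▸ j.2)
    simp [toBlock_apply, Matrix.sub_apply, Matrix.smul_apply, Matrix.one_apply, this]
  have h11 : (M - lam₀ • 1).toBlock (fun i => i ∈ S) (fun i => i ∈ S)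
      = M.toBlock (fun i => i ∈ S) (fun i => i ∈ S) - lam₀ • 1 := by
    ext i j
    simp [toBlock_apply, Matrix.sub_apply, Matrix.smul_apply, Matrix.one_apply, Subtype.val_inj]
  haveI : Invertible (M.toBlock (fun i => ¬ i ∈ S) (fun i => ¬ i ∈ S) - lam₀ • 1) :=
    invertibleOfIsUnitDet _ (isUnit_iff_ne_zero.mpr hSc)
  have key : (M - lam₀ • 1).det =
      (fromBlocks (M.toBlock (fun i => i ∈ S) (fun i => i ∈ S) - lam₀ • 1)
        (M.toBlock (fun i => i ∈ S) (fun i => ¬ i ∈ S))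
        (M.toBlock (fun i => ¬ i ∈ S) (fun i => i ∈ S))
        (M.toBlock (fun i => ¬ i ∈ S) (fun i => ¬ i ∈ S) - lam₀ • 1)).det := by
    have := Matrix.det_toBlock (M - lam₀ • 1) (fun i => i ∈ S)
    rw [hblocks, h12, h21, h11] at this
    convert this using 2
  rw [key, Matrix.det_fromBlocks₂₂] at hM
  rcases mul_eq_zero.mp hM with h | h
  · exact absurd h hSc
  · have hinv : ⅟ (M.toBlock (fun i => ¬ i ∈ S) (fun i => ¬ i ∈ S) - lam₀ • 1)
        = (M.toBlock (fun i => ¬ i ∈ S) (fun i => ¬ i ∈ S) - lam₀ • 1)⁻¹ :=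
      invOf_eq_nonsing_inv _
    rw [hinv] at h
    have heq : isoReduction M (fun i => i ∈ S) lam₀ - lam₀ • 1 =
        M.toBlock (fun i => i ∈ S) (fun i => i ∈ S) - lam₀ • 1 -
          M.toBlock (fun i => i ∈ S) (fun i => ¬ i ∈ S) *
            (M.toBlock (fun i => ¬ i ∈ S) (fun i => ¬ i ∈ S) - lam₀ • 1)⁻¹ *
              M.toBlock (fun i => ¬ i ∈ S) (fun i => i ∈ S) := by
      show M.toBlock _ _ - _ * _ * _ - lam₀ • 1 = _
      rw [sub_right_comm]
    rw [heq]
    exact h
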